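/- A function M on counting vectors is an effective co-number function if and only if M[P] = Σᵢ m(pᵢ) where m : [0,∞) → ℝ is convex, continuous, m(0) = 1, and m(p) = 0 for all p ≥ 1. Moreover this generating function m is unique. -/

import Mathlib

/-- A counting vector of dimension `N`: nonnegative entries summing to `N`. -/
def IsCountingVector {N : ℕ} (P : Fin N → ℝ) : Prop :=
  (∀ i, 0 ≤ P i) ∧ ∑ i, P i = N

/-- An effective co-number function (co-ENF): additive under concatenation,
symmetric, continuous on each `W_N`, monotone under cumulation (M⁺), and with
boundary values `M(N,0,...,0) = N − 1`. -/
def IsCoENF (M : ∀ N : ℕ, (Fin N → ℝ) → ℝ) : Prop :=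
  -- (A) additivity
  (∀ (N K : ℕ) (P : Fin N → ℝ) (Q : Fin K → ℝ),
    IsCountingVector P → IsCountingVector Q →
    M (N + K) (Fin.append P Q) = M N P + M K Q) ∧
  -- (S) symmetry
  (∀ (N : ℕ) (P : Fin N → ℝ), IsCountingVector P →
    ∀ σ : Equiv.Perm (Fin N), M N (P ∘ σ) = M N P) ∧
  -- (C) continuity on each W_N
  (∀ N : ℕ, ContinuousOn (M N) {P : Fin N → ℝ | IsCountingVector P}) ∧
  -- (M⁺) cumulation monotonicity
  (∀ (N : ℕ) (P : Fin N → ℝ), IsCountingVector P →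
    ∀ i j : Fin N, i ≠ j → P i ≤ P j →
    ∀ ε : ℝ, 0 < ε → ε ≤ P i → ε ≤ N - P j →
      M N P ≤ M N (Function.update (Function.update P i (P i - ε)) j (P j + ε))) ∧
  -- (co-B2) boundary values
  (∀ N : ℕ, M (N + 1) (fun k => if k = 0 then ((N + 1 : ℕ) : ℝ) else 0) = N)

/-- The canonical generating-function properties: convex, continuous,
`m(0) = 1`, and `m ≡ 0` on `[1,∞)`. -/
def IsCanonicalGF (m : ℝ → ℝ) : Prop :=
  ConvexOn ℝ (Set.Ici 0) m ∧ ContinuousOn m (Set.Ici 0) ∧ m 0 = 1 ∧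
    ∀ p : ℝ, 1 ≤ p → m p = 0

namespace CoENFAux

open Finset Function

lemma cv_pair_le {N : ℕ} {P : Fin N → ℝ} (hP : IsCountingVector P) {i j : Fin N}
    (hij : i ≠ j) : P i + P j ≤ N := by
  obtain ⟨hpos, hsum⟩ := hP
  have h1 : P i + P j = ∑ k ∈ ({i, j} : Finset (Fin N)), P k := by
    rw [Finset.sum_pair hij]
  have h2 : ∑ k ∈ ({i, j} : Finset (Fin N)), P k ≤ ∑ k, P k :=
    Finset.sum_le_sum_of_subset_of_nonneg (Finset.subset_univ _) (fun k _ _ => hpos k)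
  rw [h1, ← hsum]; exact h2

lemma cv_entry_le {N : ℕ} {P : Fin N → ℝ} (hP : IsCountingVector P) (i : Fin N) :
    P i ≤ N := by
  obtain ⟨hpos, hsum⟩ := hP
  have h1 : P i = ∑ k ∈ ({i} : Finset (Fin N)), P k := by simp
  have h2 : ∑ k ∈ ({i} : Finset (Fin N)), P k ≤ ∑ k, P k :=
    Finset.sum_le_sum_of_subset_of_nonneg (Finset.subset_univ _) (fun k _ _ => hpos k)
  rw [h1, ← hsum]; exact h2

lemma sum_update_pair {N : ℕ} (P : Fin N → ℝ) {i j : Fin N} (hij : i ≠ j) (x y : ℝ) :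
    ∑ k, Function.update (Function.update P i x) j y k
      = ∑ k, P k + (x - P i) + (y - P j) := by
  have hi : ({i} : Finset (Fin N)) ⊆ Finset.univ \ {j} := by simp [hij]
  rw [Finset.sum_update_of_mem (Finset.mem_univ j),
      Finset.sum_update_of_mem (by simp [hij] : i ∈ Finset.univ \ {j}),
      Finset.sum_sdiff_eq_sub hi,
      Finset.sum_sdiff_eq_sub (Finset.subset_univ ({j} : Finset (Fin N)))]
  simp; ring

/-- counting vector is preserved by a balanced two-point update -/
lemma cv_update_pair {N : ℕ} {P : Fin N → ℝ} (hP : IsCountingVector P) {i j : Fin N}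
    (hij : i ≠ j) {x y : ℝ} (hx : 0 ≤ x) (hy : 0 ≤ y) (hxy : x + y = P i + P j) :
    IsCountingVector (Function.update (Function.update P i x) j y) := by
  constructor
  · intro k
    rcases eq_or_ne k j with rfl | hkj
    · simpa using hy
    · rcases eq_or_ne k i with rfl | hki
      · simp [Function.update_of_ne hkj, hx]
      · simp [Function.update_of_ne hkj, Function.update_of_ne hki]
        exact hP.1 k
  · rw [sum_update_pair P hij x y, hP.2]; linarith

lemma cv_append {N K : ℕ} {P : Fin N → ℝ} {Q : Fin K → ℝ}
    (hP : IsCountingVector P) (hQ : IsCountingVector Q) :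
    IsCountingVector (Fin.append P Q) := by
  constructor
  · intro k
    refine Fin.addCases (fun k => ?_) (fun k => ?_) k
    · rw [Fin.append_left]; exact hP.1 k
    · rw [Fin.append_right]; exact hQ.1 k
  · rw [Fin.sum_univ_add]
    simp only [Fin.append_left, Fin.append_right, hP.2, hQ.2]
    push_cast; ring

/-- constant-one vector is counting -/
lemma cv_one (n : ℕ) : IsCountingVector (fun _ : Fin n => (1:ℝ)) := by
  constructor
  · intro i; norm_num
  · simp

/-- the pile vector -/
def pileV (n : ℕ) : Fin (n+1) → ℝ := fun k => if k = 0 then ((n + 1 : ℕ) : ℝ) else 0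

lemma cv_pile (n : ℕ) : IsCountingVector (pileV n) := by
  constructor
  · intro i; unfold pileV; split <;> positivity
  · unfold pileV
    rw [Fin.sum_univ_succ]
    simp [Fin.succ_ne_zero]


-- helpers for evaluating appends by value
lemma append_val_lt {N K : ℕ} (P : Fin N → ℝ) (Q : Fin K → ℝ) (w : Fin (N+K)) (h : w.val < N) :
    Fin.append P Q w = P ⟨w.val, h⟩ := by
  have h2 := Fin.append_left P Q ⟨w.val, h⟩
  have hw : Fin.castAdd K ⟨w.val, h⟩ = w := Fin.ext rfl
  rw [hw] at h2; exact h2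

lemma append_val_ge {N K : ℕ} (P : Fin N → ℝ) (Q : Fin K → ℝ) (w : Fin (N+K)) (h : N ≤ w.val)
    (h2 : w.val - N < K) : Fin.append P Q w = Q ⟨w.val - N, h2⟩ := by
  have h3 := Fin.append_right P Q ⟨w.val - N, h2⟩
  have hw : Fin.natAdd N ⟨w.val - N, h2⟩ = w := Fin.ext (by simp; omega)
  rw [hw] at h3; exact h3

def gfun (N iv jv t : ℕ) : ℕ :=
  if t < N then (if t = iv then 2*N+1 else if t = jv then iv else t)
  else if t = N then jv
  else if t = N+1 then N
  else if t ≤ 2*N+1 then t - 1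
  else t

lemma gfun_lt {N iv jv : ℕ} (hi : iv < N) (hj : jv < N) {t : ℕ} (ht : t < 3*N+2) :
    gfun N iv jv t < 3*N+2 := by unfold gfun; split_ifs <;> omega

lemma gfun_inj {N iv jv : ℕ} (hi : iv < N) (hj : jv < N) (hne : iv ≠ jv) {t s : ℕ}
    (ht : t < 3*N+2) (hs : s < 3*N+2) (h : gfun N iv jv t = gfun N iv jv s) : t = s := by
  unfold gfun at h; split_ifs at h <;> omega

lemma pile_zero {n : ℕ} (u : Fin (n+1)) (h : u.val = 0) : pileV n u = ((n+1:ℕ):ℝ) := by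
  unfold pileV; rw [if_pos (Fin.ext (by simp [h]))]

lemma pile_nz {n : ℕ} (u : Fin (n+1)) (h : u.val ≠ 0) : pileV n u = 0 := by
  unfold pileV; rw [if_neg (fun he => h (by rw [he]; rfl))]

section withM
variable {M : ∀ N : ℕ, (Fin N → ℝ) → ℝ} (hM : IsCoENF M)
include hM

/-- relabelling both by a dimension cast and a permutation -/
lemma relabel {n n' : ℕ} (h : n = n') {P : Fin n → ℝ} {Q : Fin n' → ℝ}
    (σ : Fin n' ≃ Fin n) (hP : IsCountingVector P)
    (hpt : ∀ k, P (σ k) = Q k) : M n P = M n' Q := by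
  subst h
  have hQ : Q = P ∘ σ := funext fun k => (hpt k).symm
  rw [hQ]
  exact (hM.2.1 n P hP σ).symm

/-- the basic move, allowing ε = 0 -/
lemma move0 {n : ℕ} {P : Fin n → ℝ} (hP : IsCountingVector P) {i j : Fin n}
    (hij : i ≠ j) (hle : P i ≤ P j) {ε : ℝ} (hε0 : 0 ≤ ε) (hεi : ε ≤ P i) :
    M n P ≤ M n (Function.update (Function.update P i (P i - ε)) j (P j + ε)) := by
  rcases eq_or_lt_of_le hε0 with rfl | hpos
  · have : Function.update (Function.update P i (P i - 0)) j (P j + 0) = P := by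
      funext k
      rcases eq_or_ne k j with rfl | hkj
      · simp
      · rcases eq_or_ne k i with rfl | hki
        · simp [Function.update_of_ne hkj]
        · simp [Function.update_of_ne hkj, Function.update_of_ne hki]
    rw [this]
  · have hpair : P i + P j ≤ n := cv_pair_le hP hij
    exact hM.2.2.2.1 n P hP i j hij hle ε hpos hεi (by linarith)

/-- value of M on dimension 0 -/
lemma M_zero (P : Fin 0 → ℝ) : M 0 P = 0 := by
  have hP : IsCountingVector P := by
    constructor
    · intro i; exact absurd i.2 (by omega)
    · simp
  have h := hM.1 0 0 P P hP hP
  have happ : Fin.append P P = P := by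
    funext k; exact absurd k.2 (by omega)
  rw [happ] at h
  linarith



lemma M_one_single : M 1 (fun _ : Fin 1 => (1:ℝ)) = 0 := by
  have h := hM.2.2.2.2 0
  have : (fun k : Fin 1 => if k = 0 then ((0 + 1 : ℕ) : ℝ) else 0)
      = fun _ : Fin 1 => (1:ℝ) := by
    funext k
    have : k = 0 := Subsingleton.elim _ _
    simp [this]
  rw [this] at h
  simpa using h

/-- M of the all-ones vector is 0 -/
lemma M_ones (n : ℕ) : M n (fun _ : Fin n => (1:ℝ)) = 0 := by
  induction n with
  | zero => exact M_zero hM _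
  | succ n ih =>
    have h := hM.1 n 1 (fun _ => (1:ℝ)) (fun _ => (1:ℝ)) (cv_one n) (cv_one 1)
    have happ : Fin.append (fun _ : Fin n => (1:ℝ)) (fun _ : Fin 1 => (1:ℝ))
        = fun _ : Fin (n+1) => (1:ℝ) := by
      funext k
      refine Fin.addCases (fun k => ?_) (fun k => ?_) k
      · rw [Fin.append_left]
      · rw [Fin.append_right]
    rw [happ, ih, M_one_single hM] at h
    simpa using h


lemma M_pile (n : ℕ) : M (n+1) (pileV n) = n := hM.2.2.2.2 n


lemma hard_chain {N : ℕ} {P : Fin N → ℝ} (hP : IsCountingVector P) {i j : Fin N}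
    (hij : i ≠ j) (hb1 : 1 ≤ P j) (hba : P j ≤ P i) {c d : ℝ}
    (hc : 1 ≤ c) (hd : 1 ≤ d) (hcd : c + d = P i + P j) :
    M N P ≤ M N (Function.update (Function.update P i c) j d) := by
  set a := P i with ha
  set b := P j with hb
  have hpair : a + b ≤ (N:ℝ) := cv_pair_le hP hij
  set K := (N+1)+(N+1) with hK
  set Cg : Fin K → ℝ := Fin.append (pileV N) (pileV N) with hCg
  set X₀ : Fin (N+K) → ℝ := Fin.append P Cg with hX₀
  set iA : Fin (N+K) := Fin.castAdd K i with hiA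
  set jA : Fin (N+K) := Fin.castAdd K j with hjA
  set t1 : Fin (N+K) := Fin.natAdd N (Fin.castAdd (N+1) (0 : Fin (N+1))) with ht1
  set t2 : Fin (N+K) := Fin.natAdd N (Fin.natAdd (N+1) (0 : Fin (N+1))) with ht2
  have hiAv : iA.val = i.val := rfl
  have hjAv : jA.val = j.val := rfl
  have ht1v : t1.val = N := by simp [ht1]
  have ht2v : t2.val = N + (N+1) := by simp [ht2]
  have hiv : i.val < N := i.2
  have hjv : j.val < N := j.2
  have hijv : i.val ≠ j.val := fun h => hij (Fin.ext h)
  have neij : iA ≠ jA := fun h => hij (Fin.ext (by rw [← hiAv, ← hjAv, h]))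
  have neit1 : iA ≠ t1 := fun h => by rw [Fin.ext_iff, hiAv, ht1v] at h; omega
  have nejt1 : jA ≠ t1 := fun h => by rw [Fin.ext_iff, hjAv, ht1v] at h; omega
  have neit2 : iA ≠ t2 := fun h => by rw [Fin.ext_iff, hiAv, ht2v] at h; omega
  have nejt2 : jA ≠ t2 := fun h => by rw [Fin.ext_iff, hjAv, ht2v] at h; omega
  have net12 : t1 ≠ t2 := fun h => by rw [Fin.ext_iff, ht1v, ht2v] at h; omega
  have hX₀i : X₀ iA = a := by rw [hX₀, hiA, Fin.append_left]
  have hX₀j : X₀ jA = b := by rw [hX₀, hjA, Fin.append_left]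
  have hX₀t1 : X₀ t1 = ((N+1 : ℕ) : ℝ) := by
    rw [hX₀, ht1, Fin.append_right, hCg, Fin.append_left]
    exact pile_zero _ rfl
  have hX₀t2 : X₀ t2 = ((N+1 : ℕ) : ℝ) := by
    rw [hX₀, ht2, Fin.append_right, hCg, Fin.append_right]
    exact pile_zero _ rfl
  have hX₀valP : ∀ (w : Fin (N+K)) (hw : w.val < N), X₀ w = P ⟨w.val, hw⟩ := by
    intro w hw; rw [hX₀]; exact append_val_lt P Cg w hw
  have hX₀val0 : ∀ (w : Fin (N+K)), ¬ (w.val < N) → w.val ≠ N → w.val ≠ N+(N+1) →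
      X₀ w = 0 := by
    intro w hw1 hw2 hw3
    have hwK : w.val < N + K := w.2
    by_cases hw4 : w.val - N < N+1
    · rw [hX₀, append_val_ge P Cg w (by omega) (by omega), hCg,
          append_val_lt (pileV N) (pileV N) _ (show w.val - N < N+1 from hw4)]
      exact pile_nz _ (show w.val - N ≠ 0 by omega)
    · rw [hX₀, append_val_ge P Cg w (by omega) (by omega), hCg,
          append_val_ge (pileV N) (pileV N) _ (show N+1 ≤ w.val - N by omega)
            (show (w.val - N) - (N+1) < N+1 by omega)]
      exact pile_nz _ (show (w.val - N) - (N+1) ≠ 0 by omega)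
  have cvX₀ : IsCountingVector X₀ := cv_append hP (cv_append (cv_pile N) (cv_pile N))
  -- step 1
  set X₁ : Fin (N+K) → ℝ := Function.update (Function.update X₀ jA 1) iA (a + b - 1) with hX₁
  have cvX₁ : IsCountingVector X₁ := by
    rw [hX₁]
    refine cv_update_pair cvX₀ (Ne.symm neij) ?_ ?_ ?_
    · norm_num
    · linarith
    · rw [hX₀i, hX₀j]; ring
  have s1 : M (N+K) X₀ ≤ M (N+K) X₁ := by
    have h := move0 hM cvX₀ (Ne.symm neij) (by rw [hX₀i, hX₀j]; exact hba) (ε := b - 1)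
      (by linarith) (by rw [hX₀j]; linarith)
    rw [hX₀i, hX₀j, show b - (b-1) = (1:ℝ) by ring, show a + (b-1) = a + b - 1 by ring] at h
    exact h
  have hX₁i : X₁ iA = a + b - 1 := by rw [hX₁]; simp
  have hX₁j : X₁ jA = 1 := by
    rw [hX₁, Function.update_of_ne (Ne.symm neij), Function.update_self]
  have hX₁t1 : X₁ t1 = ((N+1 : ℕ) : ℝ) := by
    rw [hX₁, Function.update_of_ne (Ne.symm neit1), Function.update_of_ne (Ne.symm nejt1), hX₀t1]
  have hX₁t2 : X₁ t2 = ((N+1 : ℕ) : ℝ) := by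
    rw [hX₁, Function.update_of_ne (Ne.symm neit2), Function.update_of_ne (Ne.symm nejt2), hX₀t2]
  -- step 2
  set X₂ : Fin (N+K) → ℝ := Function.update (Function.update X₁ iA d) t1 ((N:ℝ) + c) with hX₂
  have cvX₂ : IsCountingVector X₂ := by
    rw [hX₂]
    refine cv_update_pair cvX₁ neit1 ?_ ?_ ?_
    · linarith
    · positivity
    · rw [hX₁i, hX₁t1]; push_cast; linarith
  have s2 : M (N+K) X₁ ≤ M (N+K) X₂ := by
    have h := move0 hM cvX₁ neit1
      (by rw [hX₁i, hX₁t1]; push_cast; linarith) (ε := c - 1)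
      (by linarith) (by rw [hX₁i]; linarith)
    rw [hX₁i, hX₁t1, show a + b - 1 - (c-1) = d by linarith,
        show ((N+1:ℕ):ℝ) + (c-1) = (N:ℝ) + c by push_cast; ring] at h
    exact h
  have hX₂i : X₂ iA = d := by
    rw [hX₂, Function.update_of_ne neit1, Function.update_self]
  have hX₂j : X₂ jA = 1 := by
    rw [hX₂, Function.update_of_ne nejt1, Function.update_of_ne (Ne.symm neij), hX₁j]
  have hX₂t1 : X₂ t1 = (N:ℝ) + c := by rw [hX₂]; simp
  have hX₂t2 : X₂ t2 = ((N+1 : ℕ) : ℝ) := by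
    rw [hX₂, Function.update_of_ne (Ne.symm net12), Function.update_of_ne (Ne.symm neit2), hX₁t2]
  -- step 3
  set X₃ : Fin (N+K) → ℝ := Function.update (Function.update X₂ t2 c) t1 ((2*N+1 : ℕ) : ℝ) with hX₃
  have cvX₃ : IsCountingVector X₃ := by
    rw [hX₃]
    refine cv_update_pair cvX₂ (Ne.symm net12) ?_ ?_ ?_
    · linarith
    · positivity
    · rw [hX₂t1, hX₂t2]; push_cast; ring
  have s3 : M (N+K) X₂ ≤ M (N+K) X₃ := by
    have h := move0 hM cvX₂ (Ne.symm net12)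
      (by rw [hX₂t1, hX₂t2]; push_cast; linarith) (ε := ((N+1:ℕ):ℝ) - c)
      (by push_cast; linarith) (by rw [hX₂t2]; push_cast; linarith)
    rw [hX₂t1, hX₂t2, show ((N+1:ℕ):ℝ) - (((N+1:ℕ):ℝ) - c) = c by ring,
        show (N:ℝ) + c + (((N+1:ℕ):ℝ) - c) = ((2*N+1 : ℕ):ℝ) by push_cast; ring] at h
    exact h
  have hX₃i : X₃ iA = d := by
    rw [hX₃, Function.update_of_ne neit1, Function.update_of_ne neit2, hX₂i]
  have hX₃j : X₃ jA = 1 := by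
    rw [hX₃, Function.update_of_ne nejt1, Function.update_of_ne nejt2, hX₂j]
  have hX₃t1 : X₃ t1 = ((2*N+1 : ℕ) : ℝ) := by rw [hX₃]; simp
  have hX₃t2 : X₃ t2 = c := by
    rw [hX₃, Function.update_of_ne (Ne.symm net12), Function.update_self]
  have hX₃other : ∀ w : Fin (N+K), w ≠ iA → w ≠ jA → w ≠ t1 → w ≠ t2 → X₃ w = X₀ w := by
    intro w w1 w2 w3 w4
    rw [hX₃, Function.update_of_ne w3, Function.update_of_ne w4, hX₂,
        Function.update_of_ne w3, Function.update_of_ne w1, hX₁,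
        Function.update_of_ne w1, Function.update_of_ne w2]
  -- value of M X₀
  have hMX₀ : M (N+K) X₀ = M N P + ((N:ℝ) + (N:ℝ)) := by
    rw [hX₀, hM.1 N K P Cg hP (cv_append (cv_pile N) (cv_pile N)), hCg,
        hM.1 (N+1) (N+1) (pileV N) (pileV N) (cv_pile N) (cv_pile N), M_pile hM]
  -- target vector
  set B : Fin N → ℝ := Function.update (Function.update P i c) j d with hB'
  have cvB : IsCountingVector B := cv_update_pair hP hij (by linarith) (by linarith) hcd
  set one1 : Fin 1 → ℝ := fun _ => 1 with hone1
  have cvone1 : IsCountingVector one1 := cv_one 1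
  set T : Fin ((N+1)+(2*N+1)) → ℝ := Fin.append (Fin.append B one1) (pileV (2*N)) with hT
  have hBi : B i = c := by rw [hB', Function.update_of_ne hij, Function.update_self]
  have hBj : B j = d := by rw [hB', Function.update_self]
  have hBo : ∀ u : Fin N, u ≠ i → u ≠ j → B u = P u := by
    intro u u1 u2
    rw [hB', Function.update_of_ne u2, Function.update_of_ne u1]
  have hdim : N + K = (N+1)+(2*N+1) := by omega
  set g : Fin ((N+1)+(2*N+1)) → Fin (N+K) := fun v =>
    ⟨gfun N i.val j.val v.val, by
      have := gfun_lt (iv := i.val) (jv := j.val) hiv hjv (t := v.val) (by omega)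
      omega⟩ with hg
  have hgval : ∀ v, (g v).val = gfun N i.val j.val v.val := fun v => rfl
  have ginj : Function.Injective g := by
    intro v w h
    apply Fin.ext
    have hval : gfun N i.val j.val v.val = gfun N i.val j.val w.val := by
      have h2 := congrArg Fin.val h
      rw [hgval, hgval] at h2; exact h2
    exact gfun_inj hiv hjv hijv (by omega) (by omega) hval
  have gbij : Function.Bijective g :=
    (Fintype.bijective_iff_injective_and_card g).2 ⟨ginj, by simp; omega⟩
  have hpt : ∀ v, X₃ (g v) = T v := by
    intro v
    have hv2 : v.val < (N+1)+(2*N+1) := v.2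
    by_cases h1 : v.val < N
    · have hTv : T v = B ⟨v.val, h1⟩ := by
        rw [hT, append_val_lt (Fin.append B one1) (pileV (2*N)) v (show v.val < N+1 by omega)]
        exact append_val_lt B one1 _ h1
      by_cases h2 : v.val = i.val
      · have hgv : g v = t2 := by
          apply Fin.ext
          rw [hgval, ht2v]; unfold gfun
          rw [if_pos h1, if_pos h2]; omega
        rw [hgv, hX₃t2, hTv, show (⟨v.val, h1⟩ : Fin N) = i from Fin.ext h2, hBi]
      · by_cases h3 : v.val = j.val
        · have hgv : g v = iA := by
            apply Fin.ext
            rw [hgval, hiAv]; unfold gfun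
            rw [if_pos h1, if_neg h2, if_pos h3]
          rw [hgv, hX₃i, hTv, show (⟨v.val, h1⟩ : Fin N) = j from Fin.ext h3, hBj]
        · have hgvv : (g v).val = v.val := by
            rw [hgval]; unfold gfun
            rw [if_pos h1, if_neg h2, if_neg h3]
          have hother := hX₃other (g v)
            (fun h => by have := congrArg Fin.val h; omega)
            (fun h => by have := congrArg Fin.val h; omega)
            (fun h => by have := congrArg Fin.val h; omega)
            (fun h => by have := congrArg Fin.val h; omega)
          rw [hother, hX₀valP (g v) (by omega), hTv,
              hBo ⟨v.val, h1⟩ (fun h => h2 (congrArg Fin.val h)) (fun h => h3 (congrArg Fin.val h))]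
          exact congrArg P (Fin.ext hgvv)
    · by_cases h4 : v.val = N
      · have hgv : g v = jA := by
          apply Fin.ext
          rw [hgval, hjAv]; unfold gfun
          rw [if_neg h1, if_pos h4]
        have hTv : T v = 1 := by
          rw [hT, append_val_lt (Fin.append B one1) (pileV (2*N)) v (show v.val < N+1 by omega),
              append_val_ge B one1 _ (show N ≤ v.val by omega) (show v.val - N < 1 by omega)]
        rw [hgv, hX₃j, hTv]
      · by_cases h5 : v.val = N+1
        · have hgv : g v = t1 := by
            apply Fin.ext
            rw [hgval, ht1v]; unfold gfun
            rw [if_neg h1, if_neg h4, if_pos h5]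
          have hTv : T v = ((2*N+1:ℕ):ℝ) := by
            rw [hT, append_val_ge (Fin.append B one1) (pileV (2*N)) v
                (show N+1 ≤ v.val by omega) (show v.val - (N+1) < 2*N+1 by omega)]
            exact pile_zero _ (show v.val - (N+1) = 0 by omega)
          rw [hgv, hX₃t1, hTv]
        · have hTv : T v = 0 := by
            rw [hT, append_val_ge (Fin.append B one1) (pileV (2*N)) v
                (show N+1 ≤ v.val by omega) (show v.val - (N+1) < 2*N+1 by omega)]
            exact pile_nz _ (show v.val - (N+1) ≠ 0 by omega)
          by_cases h6 : v.val ≤ 2*N+1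
          · have hgvv : (g v).val = v.val - 1 := by
              rw [hgval]; unfold gfun
              rw [if_neg h1, if_neg h4, if_neg h5, if_pos h6]
            have hother := hX₃other (g v)
              (fun h => by have := congrArg Fin.val h; omega)
              (fun h => by have := congrArg Fin.val h; omega)
              (fun h => by have := congrArg Fin.val h; omega)
              (fun h => by have := congrArg Fin.val h; omega)
            rw [hother, hX₀val0 (g v) (by omega) (by omega) (by omega), hTv]
          · have hgvv : (g v).val = v.val := by
              rw [hgval]; unfold gfun
              rw [if_neg h1, if_neg h4, if_neg h5, if_neg h6]
            have hother := hX₃other (g v)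
              (fun h => by have := congrArg Fin.val h; omega)
              (fun h => by have := congrArg Fin.val h; omega)
              (fun h => by have := congrArg Fin.val h; omega)
              (fun h => by have := congrArg Fin.val h; omega)
            rw [hother, hX₀val0 (g v) (by omega) (by omega) (by omega), hTv]
  have hpt' : ∀ v, X₃ (Equiv.ofBijective g gbij v) = T v := by
    intro v; rw [Equiv.ofBijective_apply]; exact hpt v
  have hrel : M (N+K) X₃ = M ((N+1)+(2*N+1)) T :=
    relabel hM hdim (Equiv.ofBijective g gbij) cvX₃ hpt'
  have hMT : M ((N+1)+(2*N+1)) T = (M N B + 0) + ((2*N:ℕ):ℝ) := by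
    rw [hT, hM.1 (N+1) (2*N+1) _ _ (cv_append cvB cvone1) (cv_pile (2*N)),
        hM.1 N 1 B one1 cvB cvone1, hone1, M_one_single hM, M_pile hM]
  rw [hMT] at hrel
  push_cast at hrel hMX₀
  linarith
lemma swap_pair {N : ℕ} {P : Fin N → ℝ} (hP : IsCountingVector P) {i j : Fin N}
    (hij : i ≠ j) (hi1 : 1 ≤ P i) (hj1 : 1 ≤ P j) {c d : ℝ}
    (hc : 1 ≤ c) (hd : 1 ≤ d) (hcd : c + d = P i + P j) :
    M N P = M N (Function.update (Function.update P i c) j d) := by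
  set B : Fin N → ℝ := Function.update (Function.update P i c) j d with hB
  have cvB : IsCountingVector B := cv_update_pair hP hij (by linarith) (by linarith) hcd
  have hBi : B i = c := by rw [hB, Function.update_of_ne hij, Function.update_self]
  have hBj : B j = d := by rw [hB, Function.update_self]
  have hrestore : Function.update (Function.update B i (P i)) j (P j) = P := by
    funext k
    rcases eq_or_ne k j with rfl | hkj
    · rw [Function.update_self]
    · rcases eq_or_ne k i with rfl | hki
      · rw [Function.update_of_ne hkj, Function.update_self]
      · rw [Function.update_of_ne hkj, Function.update_of_ne hki, hB,
            Function.update_of_ne hkj, Function.update_of_ne hki]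
  have hrestore' : Function.update (Function.update B j (P j)) i (P i) = P := by
    rw [Function.update_comm (Ne.symm hij), hrestore]
  have le1 : M N P ≤ M N B := by
    rcases le_total (P j) (P i) with h | h
    · exact hard_chain hM hP hij hj1 h hc hd hcd
    · have h2 := hard_chain hM hP (Ne.symm hij) hi1 h hd hc (by linarith)
      rwa [Function.update_comm (Ne.symm hij) d c P] at h2
  have le2 : M N B ≤ M N P := by
    rcases le_total d c with h | h
    · have h2 := hard_chain hM cvB hij (by rw [hBj]; exact hd)
        (by rw [hBi, hBj]; exact h) hi1 hj1 (by rw [hBi, hBj]; linarith)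
      rwa [hrestore] at h2
    · have h2 := hard_chain hM cvB (Ne.symm hij) (by rw [hBi]; exact hc)
        (by rw [hBi, hBj]; exact h) hj1 hi1 (by rw [hBi, hBj]; linarith)
      rwa [hrestore'] at h2
  linarith

lemma split_pair {n : ℕ} {V : Fin (n+2) → ℝ} (hV : IsCountingVector V) {p q : Fin (n+2)}
    (hpq : p ≠ q) (hsum2 : V p + V q = 2) :
    ∃ W : Fin n → ℝ, ∃ emb : Fin n → Fin (n+2),
      Function.Injective emb ∧ (∀ k, emb k ≠ p) ∧ (∀ k, emb k ≠ q) ∧ (∀ k, W k = V (emb k)) ∧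
      IsCountingVector W ∧
      (∀ g : ℝ → ℝ, ∑ v, g (V v) = g (V p) + g (V q) + ∑ k, g (W k)) ∧
      M (n+2) V = M 2 (fun t : Fin 2 => if t = 0 then V p else V q) + M n W := by
  obtain ⟨qt, hqt⟩ := Fin.exists_succAbove_eq (Ne.symm hpq)
  set emb : Fin n → Fin (n+2) := fun k => p.succAbove (qt.succAbove k) with hemb
  have hinj : Function.Injective emb :=
    Fin.succAbove_right_injective.comp Fin.succAbove_right_injective
  have hnep : ∀ k, emb k ≠ p := fun k => Fin.succAbove_ne p _
  have hneq : ∀ k, emb k ≠ q := by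
    intro k h
    rw [← hqt] at h
    exact Fin.succAbove_ne qt k (Fin.succAbove_right_injective h)
  have hsumg : ∀ g : ℝ → ℝ, ∑ v, g (V v) = g (V p) + g (V q) + ∑ k, g (V (emb k)) := by
    intro g
    rw [Fin.sum_univ_succAbove (fun v => g (V v)) p,
        Fin.sum_univ_succAbove (fun k => g (V (p.succAbove k))) qt, hqt]
    ring
  have cvW : IsCountingVector (fun k => V (emb k)) := by
    constructor
    · intro k; exact hV.1 _
    · have h := hsumg id
      simp only [id] at h
      have h2 := hV.2
      rw [h, hsum2] at h2
      push_cast at h2 ⊢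
      linarith
  set pair2 : Fin 2 → ℝ := fun t => if t = 0 then V p else V q with hpair2
  have cvpair2 : IsCountingVector pair2 := by
    constructor
    · intro t; rw [hpair2]; dsimp only; split
      · exact hV.1 p
      · exact hV.1 q
    · rw [hpair2, Fin.sum_univ_two]
      norm_num [hsum2]
  set g2 : Fin (2+n) → Fin (n+2) := fun v =>
    if h : v.val < 2 then (if v.val = 0 then p else q) else emb ⟨v.val - 2, by omega⟩ with hg2
  have g2inj : Function.Injective g2 := by
    intro v w h
    rw [hg2] at h
    dsimp only at h
    apply Fin.ext
    split_ifs at h with a1 a2 a3 a4 a5 a6 a7 <;>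
      first
        | omega
        | exact absurd h hpq
        | exact absurd h.symm hpq
        | exact absurd h (hnep _)
        | exact absurd h (hneq _)
        | exact absurd h.symm (hnep _)
        | exact absurd h.symm (hneq _)
        | (have h3 := congrArg Fin.val (hinj h)
           simp only [Fin.val_mk] at h3
           omega)
  have g2bij : Function.Bijective g2 :=
    (Fintype.bijective_iff_injective_and_card g2).2 ⟨g2inj, by simp; omega⟩
  have hpt : ∀ v, V (Equiv.ofBijective g2 g2bij v) = Fin.append pair2 (fun k => V (emb k)) v := by
    intro v
    rw [Equiv.ofBijective_apply]
    by_cases h1 : v.val < 2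
    · rw [show Fin.append pair2 (fun k => V (emb k)) v = pair2 ⟨v.val, h1⟩ from
          append_val_lt pair2 _ v h1]
      by_cases h0 : v.val = 0
      · have hz : (⟨v.val, h1⟩ : Fin 2) = 0 := Fin.ext h0
        rw [hg2]; dsimp only; rw [dif_pos h1, if_pos h0, hpair2]
        dsimp only
        rw [if_pos hz]
      · have hz : ¬ (⟨v.val, h1⟩ : Fin 2) = 0 := fun hh => h0 (congrArg Fin.val hh)
        rw [hg2]; dsimp only; rw [dif_pos h1, if_neg h0, hpair2]
        dsimp only
        rw [if_neg hz]
    · rw [show Fin.append pair2 (fun k => V (emb k)) v = V (emb ⟨v.val - 2, by omega⟩) from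
          append_val_ge pair2 _ v (by omega) (by omega)]
      rw [hg2]; dsimp only; rw [dif_neg h1]
  refine ⟨fun k => V (emb k), emb, hinj, hnep, hneq, fun k => rfl, cvW, hsumg, ?_⟩
  have hrel : M (n+2) V = M (2+n) (Fin.append pair2 (fun k => V (emb k))) :=
    relabel hM (by omega) (Equiv.ofBijective g2 g2bij) hV hpt
  rw [hrel, hM.1 2 n pair2 _ cvpair2 cvW]

end withM
/-- generating function extracted from M -/
noncomputable def fgen (M : ∀ N : ℕ, (Fin N → ℝ) → ℝ) (x : ℝ) : ℝ :=
  M 2 (fun t : Fin 2 => if t = 0 then x else 2 - x)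

noncomputable def mgen (M : ∀ N : ℕ, (Fin N → ℝ) → ℝ) (p : ℝ) : ℝ :=
  if p < 1 then fgen M p else 0

lemma mgen_ge_one (M : ∀ N : ℕ, (Fin N → ℝ) → ℝ) {p : ℝ} (h : 1 ≤ p) : mgen M p = 0 := by
  unfold mgen; rw [if_neg (not_lt.mpr h)]

lemma mgen_lt_one (M : ∀ N : ℕ, (Fin N → ℝ) → ℝ) {p : ℝ} (h : p < 1) :
    mgen M p = fgen M p := by
  unfold mgen; rw [if_pos h]

lemma sum_comp_update_pair {N : ℕ} (g : ℝ → ℝ) (P : Fin N → ℝ) {i j : Fin N}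
    (hij : i ≠ j) (x y : ℝ) :
    ∑ k, g (Function.update (Function.update P i x) j y k)
      = ∑ k, g (P k) + (g x - g (P i)) + (g y - g (P j)) := by
  have h : (fun k => g (Function.update (Function.update P i x) j y k))
      = Function.update (Function.update (fun k => g (P k)) i (g x)) j (g y) := by
    funext k
    rcases eq_or_ne k j with rfl | hkj
    · simp
    · rcases eq_or_ne k i with rfl | hki
      · rw [Function.update_of_ne hkj, Function.update_self,
            Function.update_of_ne hkj, Function.update_self]
      · rw [Function.update_of_ne hkj, Function.update_of_ne hki,
            Function.update_of_ne hkj, Function.update_of_ne hki]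
  calc ∑ k, g (Function.update (Function.update P i x) j y k)
      = ∑ k, Function.update (Function.update (fun k => g (P k)) i (g x)) j (g y) k := by
        rw [h]
    _ = ∑ k, g (P k) + (g x - g (P i)) + (g y - g (P j)) :=
        sum_update_pair (fun k => g (P k)) hij (g x) (g y)

section withM2
variable {M : ∀ N : ℕ, (Fin N → ℝ) → ℝ} (hM : IsCoENF M)
include hM

lemma formula_allones {N : ℕ} {P : Fin N → ℝ} (hP : IsCountingVector P)
    (h : ∀ i, ¬ P i < 1) : M N P = ∑ i, mgen M (P i) := by
  have hz : ∑ i, (P i - 1) = 0 := by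
    rw [Finset.sum_sub_distrib, hP.2]
    simp
  have h1 : ∀ i, P i = 1 := by
    intro i
    have h2 : ∀ i ∈ Finset.univ, (0:ℝ) ≤ P i - 1 := fun i _ => by
      have := not_lt.mp (h i); linarith
    have := (Finset.sum_eq_zero_iff_of_nonneg h2).mp hz i (Finset.mem_univ i)
    linarith
  have hPfun : P = fun _ => (1:ℝ) := funext h1
  rw [hPfun, M_ones hM]
  symm
  apply Finset.sum_eq_zero
  intro i _
  exact mgen_ge_one M le_rfl

lemma exists_big {N : ℕ} {P : Fin N → ℝ} (hP : IsCountingVector P) {i₀ : Fin N}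
    (h : P i₀ < 1) : ∃ j, 1 < P j := by
  by_contra hc
  push_neg at hc
  have hlt : ∑ i, P i < ∑ i : Fin N, (1:ℝ) :=
    Finset.sum_lt_sum (fun i _ => hc i) ⟨i₀, Finset.mem_univ i₀, h⟩
  rw [hP.2] at hlt
  simp at hlt

lemma formula_aux : ∀ (s l N : ℕ) (P : Fin N → ℝ), IsCountingVector P →
    (Finset.univ.filter fun i => P i < 1).card ≤ s →
    (Finset.univ.filter fun i => 1 < P i).card ≤ l →
    M N P = ∑ i, mgen M (P i) := by
  intro s
  induction s with
  | zero =>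
    intro l N P hP hs _
    refine formula_allones hM hP ?_
    intro i hi
    have hmem : i ∈ Finset.univ.filter fun i => P i < 1 := by simp [hi]
    have := Finset.card_pos.mpr ⟨i, hmem⟩
    omega
  | succ s ihs =>
    intro l
    induction l with
    | zero =>
      intro N P hP hs hl
      by_cases hns : ∀ i, ¬ P i < 1
      · exact formula_allones hM hP hns
      · push_neg at hns
        obtain ⟨i₀, hi₀⟩ := hns
        obtain ⟨j, hj⟩ := exists_big hM hP hi₀
        have hmem : j ∈ Finset.univ.filter fun i => 1 < P i := by simp [hj]
        have := Finset.card_pos.mpr ⟨j, hmem⟩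
        omega
    | succ l ihl =>
      intro N P hP hs hl
      by_cases hns : ∀ i, ¬ P i < 1
      · exact formula_allones hM hP hns
      push_neg at hns
      obtain ⟨i₀, hi₀⟩ := hns
      have hx0 : 0 ≤ P i₀ := hP.1 i₀
      by_cases hbig : ∃ jj, 2 - P i₀ ≤ P jj
      · -- EXTRACTION
        cases N with
        | zero => exact i₀.elim0
        | succ n =>
        obtain ⟨jj, hjj⟩ := hbig
        have hne : jj ≠ i₀ := by
          intro h; rw [h] at hjj; linarith
        set P₁ : Fin ((n+1)+1) → ℝ := Fin.append P (fun _ : Fin 1 => (1:ℝ)) with hP₁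
        have cvP₁ : IsCountingVector P₁ := cv_append hP (cv_one 1)
        have hMP₁ : M ((n+1)+1) P₁ = M (n+1) P := by
          rw [hP₁, hM.1 (n+1) 1 P _ hP (cv_one 1), M_one_single hM, add_zero]
        set jA : Fin ((n+1)+1) := Fin.castAdd 1 jj with hjA
        set lst : Fin ((n+1)+1) := Fin.natAdd (n+1) (0 : Fin 1) with hlst
        have hjAv : jA.val = jj.val := rfl
        have hlstv : lst.val = n+1 := by simp [hlst]
        have hjAlst : jA ≠ lst := by
          intro h
          have h2 := congrArg Fin.val h
          rw [hjAv, hlstv] at h2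
          have := jj.2; omega
        have hP₁jA : P₁ jA = P jj := by rw [hP₁, hjA, Fin.append_left]
        have hP₁lst : P₁ lst = 1 := by rw [hP₁, hlst, Fin.append_right]
        have hswap := swap_pair hM cvP₁ hjAlst
          (by rw [hP₁jA]; linarith) (by rw [hP₁lst])
          (c := P jj + P i₀ - 1) (d := 2 - P i₀)
          (by linarith) (by linarith) (by rw [hP₁jA, hP₁lst]; ring)
        set P₂ : Fin ((n+1)+1) → ℝ :=
          Function.update (Function.update P₁ jA (P jj + P i₀ - 1)) lst (2 - P i₀) with hP₂
        have cvP₂ : IsCountingVector P₂ := by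
          rw [hP₂]
          refine cv_update_pair cvP₁ hjAlst ?_ ?_ ?_
          · linarith
          · linarith
          · rw [hP₁jA, hP₁lst]; ring
        set pE : Fin ((n+1)+1) := Fin.castAdd 1 i₀ with hpE
        have hpEv : pE.val = i₀.val := rfl
        have hpElst : pE ≠ lst := by
          intro h
          have h2 := congrArg Fin.val h
          rw [hpEv, hlstv] at h2
          have := i₀.2; omega
        have hpEjA : pE ≠ jA := by
          intro h
          have h2 := congrArg Fin.val h
          rw [hpEv, hjAv] at h2
          exact hne (Fin.ext h2.symm)
        have hP₂pE : P₂ pE = P i₀ := by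
          rw [hP₂, Function.update_of_ne hpElst, Function.update_of_ne hpEjA, hP₁, hpE,
              Fin.append_left]
        have hP₂lst : P₂ lst = 2 - P i₀ := by rw [hP₂, Function.update_self]
        have hP₂jA : P₂ jA = P jj + P i₀ - 1 := by
          rw [hP₂, Function.update_of_ne hjAlst, Function.update_self]
        have hsum2 : P₂ pE + P₂ lst = 2 := by rw [hP₂pE, hP₂lst]; ring
        obtain ⟨W, emb, hinj, hnp, hnq, hWe, cvW, hsumW, hMsplit⟩ :=
          split_pair hM (n := n) cvP₂ hpElst hsum2
        have hpairval : (fun t : Fin 2 => if t = 0 then P₂ pE else P₂ lst)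
            = (fun t : Fin 2 => if t = 0 then P i₀ else 2 - P i₀) := by
          rw [hP₂pE, hP₂lst]
        rw [hpairval] at hMsplit
        -- small entries of W inject into small entries of P minus i₀
        have hvlt : ∀ k : Fin n, (emb k).val < n+1 := by
          intro k
          have h1 : (emb k).val < (n+1)+1 := (emb k).2
          have h2 : (emb k).val ≠ n+1 := fun h => hnq k (Fin.ext (by rw [hlstv]; exact h))
          omega
        set φ : Fin n → Fin (n+1) := fun k => ⟨(emb k).val, hvlt k⟩ with hφ
        have hsW : (Finset.univ.filter fun k => W k < 1).card ≤ s := by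
          have hmaps : ∀ k ∈ (Finset.univ.filter fun k => W k < 1),
              φ k ∈ (Finset.univ.filter fun u : Fin (n+1) => P u < 1).erase i₀ := by
            intro k hk
            rw [Finset.mem_filter] at hk
            have hk2 : W k < 1 := hk.2
            have hkjA : emb k ≠ jA := by
              intro h
              rw [hWe k, h, hP₂jA] at hk2; linarith
            have hPval : W k = P (φ k) := by
              rw [hWe k, hP₂, Function.update_of_ne (hnq k), Function.update_of_ne hkjA, hP₁]
              exact append_val_lt P (fun _ : Fin 1 => (1:ℝ)) (emb k) (hvlt k)
            refine Finset.mem_erase.mpr ⟨?_, Finset.mem_filter.mpr ⟨Finset.mem_univ _, ?_⟩⟩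
            · intro h
              have h2 := congrArg Fin.val h
              rw [hφ] at h2
              exact hnp k (Fin.ext (by rw [hpEv]; exact h2))
            · rw [← hPval]; exact hk2
          have hinjOn : Set.InjOn φ (Finset.univ.filter fun k => W k < 1) := by
            intro k _ k' _ h
            have h2 := congrArg Fin.val h
            simp only [hφ] at h2
            exact hinj (Fin.ext h2)
          have hcard := Finset.card_le_card_of_injOn φ hmaps hinjOn
          have hi₀mem : i₀ ∈ Finset.univ.filter fun u : Fin (n+1) => P u < 1 := by
            simp [hi₀]
          rw [Finset.card_erase_of_mem hi₀mem] at hcard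
          omega
        have hlW : (Finset.univ.filter fun k => 1 < W k).card ≤ n :=
          le_trans (Finset.card_filter_le _ _) (by simp)
        have hMW := ihs n n W cvW hsW hlW
        -- assemble
        have hMsplit' : M ((n+1)+1) P₂
            = fgen M (P i₀) + M n W := hMsplit
        have hsumW' : ∑ v : Fin ((n+1)+1), mgen M (P₂ v)
            = mgen M (P₂ pE) + mgen M (P₂ lst) + ∑ k, mgen M (W k) := hsumW (mgen M)
        have hsum1 : ∑ v : Fin ((n+1)+1), mgen M (P₁ v)
            = ∑ i : Fin (n+1), mgen M (P i) := by
          rw [hP₁, Fin.sum_univ_add]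
          simp only [Fin.append_left, Fin.append_right]
          have : ∑ _i : Fin 1, mgen M 1 = 0 := by
            simp [mgen_ge_one M le_rfl]
          rw [this, add_zero]
        have hsum2' : ∑ v : Fin ((n+1)+1), mgen M (P₂ v)
            = ∑ v : Fin ((n+1)+1), mgen M (P₁ v) := by
          rw [hP₂, sum_comp_update_pair (mgen M) P₁ hjAlst,
              mgen_ge_one M (by linarith : (1:ℝ) ≤ P jj + P i₀ - 1),
              mgen_ge_one M (by linarith : (1:ℝ) ≤ 2 - P i₀), hP₁jA, hP₁lst,
              mgen_ge_one M (by linarith : (1:ℝ) ≤ P jj), mgen_ge_one M le_rfl]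
          ring
        have hmpE : mgen M (P₂ pE) = fgen M (P i₀) := by
          rw [hP₂pE, mgen_lt_one M hi₀]
        have hmlst : mgen M (P₂ lst) = 0 := by
          rw [hP₂lst, mgen_ge_one M (by linarith)]
        rw [← hMP₁, hswap, hMsplit', hMW, ← hsum1, ← hsum2', hsumW', hmpE, hmlst]
        ring
      · -- MERGE
        have hbig2 : ∃ j₁ j₂, j₁ ≠ j₂ ∧ 1 < P j₁ ∧ 1 < P j₂ := by
          by_contra hc
          push_neg at hc
          obtain ⟨j₀, hj₀⟩ := exists_big hM hP hi₀
          have huniq : ∀ i, 1 < P i → i = j₀ := by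
            intro i hi
            by_contra hne2
            exact absurd hj₀ (not_lt.mpr (hc i j₀ hne2 hi))
          have hi₀j₀ : i₀ ≠ j₀ := fun h => by rw [h] at hi₀; linarith
          have hsplit : ∑ i, ((1:ℝ) - P i) = 0 := by
            rw [Finset.sum_sub_distrib, hP.2]; simp
          have herase := Finset.add_sum_erase Finset.univ (fun i => (1:ℝ) - P i)
            (Finset.mem_univ j₀)
          have hterm : (1:ℝ) - P i₀ ≤ ∑ i ∈ Finset.univ.erase j₀, (1 - P i) := by
            refine Finset.single_le_sum (f := fun i => (1:ℝ) - P i) ?_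
              (Finset.mem_erase.mpr ⟨hi₀j₀, Finset.mem_univ _⟩)
            intro i hi
            rcases Finset.mem_erase.mp hi with ⟨hne2, _⟩
            show (0:ℝ) ≤ 1 - P i
            by_cases h1 : 1 < P i
            · exact absurd (huniq i h1) hne2
            · have := not_lt.mp h1; linarith
          exact hbig ⟨j₀, by linarith⟩
        obtain ⟨j₁, j₂, hne, hb1, hb2⟩ := hbig2
        have hswap := swap_pair hM hP hne (by linarith) (by linarith)
          (c := P j₁ + P j₂ - 1) (d := 1) (by linarith) le_rfl (by ring)
        set P' : Fin N → ℝ :=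
          Function.update (Function.update P j₁ (P j₁ + P j₂ - 1)) j₂ 1 with hP'
        have cvP' : IsCountingVector P' := by
          rw [hP']
          exact cv_update_pair hP hne (by linarith) (by norm_num) (by ring)
        have hsub1 : (Finset.univ.filter fun u => P' u < 1)
            ⊆ (Finset.univ.filter fun u => P u < 1) := by
          intro u hu
          rw [Finset.mem_filter] at hu ⊢
          refine ⟨Finset.mem_univ _, ?_⟩
          rcases eq_or_ne u j₂ with rfl | h2
          · rw [hP', Function.update_self] at hu
            linarith [hu.2]
          rcases eq_or_ne u j₁ with rfl | h1
          · rw [hP', Function.update_of_ne hne, Function.update_self] at hu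
            linarith [hu.2]
          · rw [hP', Function.update_of_ne h2, Function.update_of_ne h1] at hu
            exact hu.2
        have hsub2 : (Finset.univ.filter fun u => 1 < P' u)
            ⊆ (Finset.univ.filter fun u => 1 < P u).erase j₂ := by
          intro u hu
          rw [Finset.mem_filter] at hu
          rcases eq_or_ne u j₂ with rfl | h2
          · rw [hP', Function.update_self] at hu
            linarith [hu.2]
          refine Finset.mem_erase.mpr ⟨h2, Finset.mem_filter.mpr ⟨Finset.mem_univ _, ?_⟩⟩
          rcases eq_or_ne u j₁ with rfl | h1
          · exact hb1
          · rw [hP', Function.update_of_ne h2, Function.update_of_ne h1] at hu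
            exact hu.2
        have hs' : (Finset.univ.filter fun u => P' u < 1).card ≤ s+1 :=
          le_trans (Finset.card_le_card hsub1) hs
        have hl' : (Finset.univ.filter fun u => 1 < P' u).card ≤ l := by
          have hj₂mem : j₂ ∈ Finset.univ.filter fun u => 1 < P u := by simp [hb2]
          have := Finset.card_le_card hsub2
          rw [Finset.card_erase_of_mem hj₂mem] at this
          omega
        have hMP' := ihl N P' cvP' hs' hl'
        rw [hswap, hMP', hP',
            sum_comp_update_pair (mgen M) P hne,
            mgen_ge_one M (by linarith : (1:ℝ) ≤ P j₁ + P j₂ - 1),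
            mgen_ge_one M (le_of_lt hb1), mgen_ge_one M le_rfl,
            mgen_ge_one M (le_of_lt hb2)]
        ring

lemma formula {N : ℕ} {P : Fin N → ℝ} (hP : IsCountingVector P) :
    M N P = ∑ i, mgen M (P i) :=
  formula_aux hM _ _ N P hP le_rfl le_rfl

end withM2

section withM3
variable {M : ∀ N : ℕ, (Fin N → ℝ) → ℝ} (hM : IsCoENF M)
include hM

lemma fgen_one : fgen M 1 = 0 := by
  have h : (fun t : Fin 2 => if t = 0 then (1:ℝ) else 2 - 1) = fun _ : Fin 2 => (1:ℝ) := by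
    funext t; split <;> norm_num
  unfold fgen
  rw [h]
  exact M_ones hM 2

lemma fgen_zero : fgen M 0 = 1 := by
  have hB := hM.2.2.2.2 1
  have hcv : IsCountingVector (fun k : Fin 2 => if k = 0 then ((1 + 1 : ℕ) : ℝ) else 0) := by
    constructor
    · intro t; dsimp only; split <;> norm_num
    · rw [Fin.sum_univ_two]; norm_num
  have hS := hM.2.1 2 _ hcv (Equiv.swap 0 1)
  have hfun : (fun k : Fin 2 => if k = 0 then ((1 + 1 : ℕ) : ℝ) else 0) ∘ (Equiv.swap 0 1)
      = fun t : Fin 2 => if t = 0 then (0:ℝ) else 2 - 0 := by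
    funext t
    fin_cases t <;> simp [Equiv.swap_apply_left, Equiv.swap_apply_right]
  unfold fgen
  rw [← hfun, hS, hB]
  norm_num

lemma fgen_nonneg {x : ℝ} (hx0 : 0 ≤ x) (hx1 : x ≤ 1) : 0 ≤ fgen M x := by
  have hne : (0 : Fin 2) ≠ 1 := by decide
  have h := move0 hM (cv_one 2) hne (le_refl _) (ε := 1 - x) (by linarith) (by linarith)
  have hfun : Function.update (Function.update (fun _ : Fin 2 => (1:ℝ)) 0 (1 - (1-x))) 1
      (1 + (1-x)) = fun t : Fin 2 => if t = 0 then x else 2 - x := by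
    funext t
    fin_cases t <;> simp [Function.update] <;> ring
  rw [M_ones hM 2, hfun] at h
  exact h

lemma fgen_contOn : ContinuousOn (fgen M) (Set.Icc 0 1) := by
  have hC := hM.2.2.1 2
  have hpath : Continuous (fun x : ℝ => (fun t : Fin 2 => if t = 0 then x else 2 - x)) := by
    apply continuous_pi
    intro t
    by_cases h : t = 0
    · simp only [h, if_pos]
      exact continuous_id
    · simp only [if_neg h]
      exact continuous_const.sub continuous_id
  have hmaps : Set.MapsTo (fun x : ℝ => (fun t : Fin 2 => if t = 0 then x else 2 - x))
      (Set.Icc 0 1) {P : Fin 2 → ℝ | IsCountingVector P} := by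
    intro x hx
    constructor
    · intro t; dsimp only; split
      · exact hx.1
      · have := hx.2; linarith
    · rw [Fin.sum_univ_two]; norm_num
  have := ContinuousOn.comp hC hpath.continuousOn hmaps
  exact this

lemma mgen_eq_fgen_unit {p : ℝ} (hp0 : 0 ≤ p) (hp1 : p ≤ 1) : mgen M p = fgen M p := by
  by_cases h : p < 1
  · exact mgen_lt_one M h
  · have : p = 1 := le_antisymm hp1 (not_lt.mp h)
    rw [this, mgen_ge_one M le_rfl, fgen_one hM]

lemma fgen_midpoint {x y : ℝ} (hx0 : 0 ≤ x) (hx1 : x ≤ 1) (hy0 : 0 ≤ y) (hy1 : y ≤ 1)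
    (hxy : x ≤ y) : 2 * fgen M ((x+y)/2) ≤ fgen M x + fgen M y := by
  set z := (x+y)/2 with hz
  have hz0 : 0 ≤ z := by rw [hz]; linarith
  have hz1 : z ≤ 1 := by rw [hz]; linarith
  set V : Fin 4 → ℝ := fun k => if k = 0 then z else if k = 1 then z
    else if k = 2 then 2 - x else 2 - y with hV
  have cvV : IsCountingVector V := by
    constructor
    · intro k; rw [hV]; dsimp only; split_ifs <;> linarith
    · rw [hV, Fin.sum_univ_four]
      norm_num
      rw [hz]; push_cast; ring
  have hne : (0 : Fin 4) ≠ 1 := by decide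
  have hV0 : V 0 = z := by simp [hV]
  have hV1 : V 1 = z := by simp [hV]
  have h := move0 hM cvV hne (by rw [hV0, hV1]) (ε := z - x)
    (by rw [hz]; linarith) (by rw [hV0, hz]; linarith)
  set V' : Fin 4 → ℝ := fun k => if k = 0 then x else if k = 1 then y
    else if k = 2 then 2 - x else 2 - y with hV'
  have hfun : Function.update (Function.update V 0 (V 0 - (z-x))) 1 (V 1 + (z-x)) = V' := by
    funext k
    fin_cases k <;> simp [Function.update, hV, hV', hz] <;> ring
  rw [hfun] at h
  have cvV' : IsCountingVector V' := by
    constructor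
    · intro k; rw [hV']; dsimp only; split_ifs <;> linarith
    · rw [hV', Fin.sum_univ_four]
      norm_num
      push_cast; ring
  have hfL := formula hM cvV
  have hfR := formula hM cvV'
  have hV2 : V 2 = 2 - x := by simp [hV]
  have hV3 : V 3 = 2 - y := by simp [hV]
  have hsumL : ∑ i, mgen M (V i) = 2 * fgen M z := by
    rw [Fin.sum_univ_four, hV0, hV1, hV2, hV3]
    rw [mgen_eq_fgen_unit hM hz0 hz1,
        mgen_ge_one M (by linarith : (1:ℝ) ≤ 2 - x),
        mgen_ge_one M (by linarith : (1:ℝ) ≤ 2 - y)]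
    ring
  have hV'0 : V' 0 = x := by simp [hV']
  have hV'1 : V' 1 = y := by simp [hV']
  have hV'2 : V' 2 = 2 - x := by simp [hV']
  have hV'3 : V' 3 = 2 - y := by simp [hV']
  have hsumR : ∑ i, mgen M (V' i) = fgen M x + fgen M y := by
    rw [Fin.sum_univ_four, hV'0, hV'1, hV'2, hV'3]
    rw [mgen_eq_fgen_unit hM hx0 hx1, mgen_eq_fgen_unit hM hy0 hy1,
        mgen_ge_one M (by linarith : (1:ℝ) ≤ 2 - x),
        mgen_ge_one M (by linarith : (1:ℝ) ≤ 2 - y)]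
    ring
  rw [hfL, hsumL, hfR, hsumR] at h
  rw [hz] at *
  linarith

lemma fgen_midpoint' {x y : ℝ} (hx : x ∈ Set.Icc (0:ℝ) 1) (hy : y ∈ Set.Icc (0:ℝ) 1) :
    2 * fgen M ((x+y)/2) ≤ fgen M x + fgen M y := by
  rcases le_total x y with h | h
  · exact fgen_midpoint hM hx.1 hx.2 hy.1 hy.2 h
  · have := fgen_midpoint hM hy.1 hy.2 hx.1 hx.2 h
    rw [show (y+x)/2 = (x+y)/2 by ring] at this
    linarith

lemma fgen_convex_aux {x y : ℝ} (hx : x ∈ Set.Icc (0:ℝ) 1) (hy : y ∈ Set.Icc (0:ℝ) 1) :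
    ∀ t : ℝ, t ∈ Set.Icc (0:ℝ) 1 →
      fgen M (t*x + (1-t)*y) ≤ t * fgen M x + (1-t) * fgen M y := by
  obtain ⟨hx0, hx1⟩ := hx
  obtain ⟨hy0, hy1⟩ := hy
  set g : ℝ → ℝ := fun t => t * fgen M x + (1-t) * fgen M y - fgen M (t*x + (1-t)*y) with hg
  have hmem : ∀ t ∈ Set.Icc (0:ℝ) 1, t*x + (1-t)*y ∈ Set.Icc (0:ℝ) 1 := by
    rintro t ⟨ht0, ht1⟩
    constructor
    · have h1 : 0 ≤ t*x := mul_nonneg ht0 hx0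
      have h2 : 0 ≤ (1-t)*y := mul_nonneg (by linarith) hy0
      linarith
    · have h1 : t*x ≤ t*1 := mul_le_mul_of_nonneg_left hx1 ht0
      have h2 : (1-t)*y ≤ (1-t)*1 := mul_le_mul_of_nonneg_left hy1 (by linarith)
      linarith
  have hgc : ContinuousOn g (Set.Icc 0 1) := by
    rw [hg]
    refine ContinuousOn.sub (Continuous.continuousOn (by fun_prop)) ?_
    have haff : Continuous (fun t : ℝ => t*x + (1-t)*y) := by fun_prop
    have := ContinuousOn.comp (fgen_contOn hM) haff.continuousOn hmem
    simpa [Function.comp_def] using this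
  have hmid : ∀ s ∈ Set.Icc (0:ℝ) 1, ∀ t ∈ Set.Icc (0:ℝ) 1, g s + g t ≤ 2 * g ((s+t)/2) := by
    intro s hs t ht
    have h := fgen_midpoint' hM (hmem s hs) (hmem t ht)
    have harg : ((s*x + (1-s)*y) + (t*x + (1-t)*y))/2
        = ((s+t)/2)*x + (1 - (s+t)/2)*y := by ring
    rw [harg] at h
    rw [hg]; dsimp only
    linarith
  have hdy : ∀ n : ℕ, ∀ k : ℕ, k ≤ 2^n → 0 ≤ g ((k : ℝ)/ 2^n) := by
    intro n
    induction n with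
    | zero =>
      intro k hk
      interval_cases k
      · rw [hg]; norm_num
      · rw [hg]; norm_num
    | succ n ih =>
      intro k hk
      have h2pow : (2:ℕ)^(n+1) = 2*2^n := by ring
      rcases Nat.even_or_odd k with ⟨m, hm⟩ | ⟨m, hm⟩
      · have heq : ((k:ℝ))/2^(n+1) = (m:ℝ)/2^n := by
          rw [hm]; push_cast
          rw [pow_succ]
          field_simp
          ring
        rw [heq]
        exact ih m (by omega)
      · have hm1 : m + 1 ≤ 2^n := by omega
        have ha := ih m (by omega)
        have hb := ih (m+1) hm1
        have hpow0 : (0:ℝ) < 2^n := by positivity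
        have hmema : (m:ℝ)/2^n ∈ Set.Icc (0:ℝ) 1 := by
          constructor
          · positivity
          · rw [div_le_one hpow0]
            calc (m:ℝ) ≤ ((2^n : ℕ) : ℝ) := by exact_mod_cast (by omega : m ≤ 2^n)
              _ = 2^n := by push_cast; ring
        have hmemb : ((m:ℝ)+1)/2^n ∈ Set.Icc (0:ℝ) 1 := by
          constructor
          · positivity
          · rw [div_le_one hpow0]
            calc (m:ℝ)+1 ≤ ((2^n : ℕ) : ℝ) := by exact_mod_cast hm1
              _ = 2^n := by push_cast; ring
        have hmm := hmid _ hmema _ hmemb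
        have harg : ((m:ℝ)/2^n + ((m:ℝ)+1)/2^n)/2 = (k:ℝ)/2^(n+1) := by
          rw [hm]; push_cast
          rw [pow_succ]
          field_simp
          ring
        rw [harg] at hmm
        have hb' : 0 ≤ g (((m:ℝ)+1)/2^n) := by
          have : ((m:ℝ)+1) = ((m+1 : ℕ) : ℝ) := by push_cast; ring
          rw [this]; exact hb
        linarith
  rintro t ⟨ht0, ht1⟩
  set u : ℕ → ℝ := fun n => ((⌊t * 2^n⌋₊ : ℕ) : ℝ)/2^n with hu
  have hfacts : ∀ n : ℕ, ⌊t * 2^n⌋₊ ≤ 2^n ∧ u n ≤ t ∧ t - (1/2)^n ≤ u n := by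
    intro n
    have hpow0 : (0:ℝ) < 2^n := by positivity
    have htn0 : 0 ≤ t * 2^n := by positivity
    have hfl : (⌊t * 2^n⌋₊ : ℝ) ≤ t * 2^n := Nat.floor_le htn0
    have hfl2 : t * 2^n < (⌊t * 2^n⌋₊ : ℝ) + 1 := Nat.lt_floor_add_one _
    have hb : ⌊t * 2^n⌋₊ ≤ 2^n := by
      have : t * 2^n ≤ ((2^n : ℕ) : ℝ) := by
        push_cast
        nlinarith
      calc ⌊t * 2^n⌋₊ ≤ ⌊((2^n : ℕ) : ℝ)⌋₊ := Nat.floor_le_floor this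
        _ = 2^n := Nat.floor_natCast _
    refine ⟨hb, ?_, ?_⟩
    · rw [hu]; dsimp only
      rw [div_le_iff₀ hpow0]
      exact hfl
    · rw [hu]; dsimp only
      rw [le_div_iff₀ hpow0]
      have h2 : ((1:ℝ)/2)^n * 2^n = 1 := by
        rw [← mul_pow]; norm_num
      have hexp : (t - (1/2:ℝ)^n) * 2^n = t*2^n - 1 := by
        calc (t - (1/2:ℝ)^n) * 2^n = t*2^n - (1/2:ℝ)^n*2^n := by ring
          _ = t*2^n - 1 := by rw [h2]
      rw [hexp]
      linarith
  have hlim : Filter.Tendsto u Filter.atTop (nhds t) := by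
    have h0 : Filter.Tendsto (fun n : ℕ => ((1:ℝ)/2)^n) Filter.atTop (nhds 0) :=
      tendsto_pow_atTop_nhds_zero_of_lt_one (by norm_num) (by norm_num)
    have h1 : Filter.Tendsto (fun n : ℕ => t - (1/2:ℝ)^n) Filter.atTop (nhds t) := by
      have := Filter.Tendsto.const_sub t h0
      simpa using this
    exact tendsto_of_tendsto_of_tendsto_of_le_of_le h1 tendsto_const_nhds
      (fun n => (hfacts n).2.2) (fun n => (hfacts n).2.1)
  have hmemu : ∀ n, u n ∈ Set.Icc (0:ℝ) 1 := by
    intro n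
    have hpow0 : (0:ℝ) < 2^n := by positivity
    constructor
    · rw [hu]; positivity
    · rw [hu]; dsimp only
      rw [div_le_one hpow0]
      calc ((⌊t*2^n⌋₊:ℕ):ℝ) ≤ ((2^n : ℕ):ℝ) := by exact_mod_cast (hfacts n).1
        _ = 2^n := by push_cast; ring
  have hge : ∀ n, 0 ≤ g (u n) := fun n => hdy n _ (hfacts n).1
  have hgt : ContinuousWithinAt g (Set.Icc 0 1) t := hgc t ⟨ht0, ht1⟩
  have htend : Filter.Tendsto (fun n => g (u n)) Filter.atTop (nhds (g t)) := by
    apply (hgt.tendsto).comp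
    rw [tendsto_nhdsWithin_iff]
    exact ⟨hlim, Filter.Eventually.of_forall hmemu⟩
  have hgt0 : 0 ≤ g t := ge_of_tendsto' htend hge
  rw [hg] at hgt0
  dsimp only at hgt0
  linarith

lemma mgen_zero : mgen M 0 = 1 := by
  rw [mgen_lt_one M (by norm_num), fgen_zero hM]

lemma mgen_contOn : ContinuousOn (mgen M) (Set.Ici 0) := by
  have h1 : ContinuousOn (fun p : ℝ => fgen M (min p 1)) (Set.Ici 0) := by
    have hmin : Continuous (fun p : ℝ => min p 1) := continuous_id.min continuous_const
    have hmaps : Set.MapsTo (fun p : ℝ => min p 1) (Set.Ici 0) (Set.Icc 0 1) := by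
      intro p hp
      exact ⟨le_min hp zero_le_one, min_le_right _ _⟩
    have := ContinuousOn.comp (fgen_contOn hM) hmin.continuousOn hmaps
    simpa [Function.comp_def] using this
  refine ContinuousOn.congr h1 ?_
  intro p hp
  dsimp only
  by_cases h : p ≤ 1
  · rw [min_eq_left h, mgen_eq_fgen_unit hM hp h]
  · rw [min_eq_right (by linarith : (1:ℝ) ≤ p), mgen_ge_one M (by linarith), fgen_one hM]

lemma mgen_convex : ConvexOn ℝ (Set.Ici 0) (mgen M) := by
  have key : ∀ p q a b : ℝ, 0 ≤ p → p < 1 → 1 ≤ q → 0 ≤ a → 0 ≤ b → a + b = 1 →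
      mgen M (a*p + b*q) ≤ a * mgen M p + b * mgen M q := by
    intro p q a b hp0 hp1 hq1 ha hb hab
    rw [mgen_ge_one M hq1, mul_zero, add_zero, mgen_lt_one M hp1]
    by_cases hz : a*p + b*q < 1
    · rw [mgen_lt_one M hz]
      have hzp : p ≤ a*p + b*q := by nlinarith [mul_nonneg hb (by linarith : (0:ℝ) ≤ q - p)]
      have hz0 : 0 ≤ a*p + b*q :=
        add_nonneg (mul_nonneg ha hp0) (mul_nonneg hb (by linarith))
      have hp1' : (0:ℝ) < 1 - p := by linarith
      set μ := (1 - (a*p + b*q))/(1 - p) with hμ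
      have hμ0 : 0 ≤ μ := div_nonneg (by linarith) (by linarith)
      have hμ1 : μ ≤ 1 := by rw [hμ, div_le_one hp1']; linarith
      have hcomb := fgen_convex_aux hM ⟨hp0, le_of_lt hp1⟩
        ⟨zero_le_one, le_refl (1:ℝ)⟩ μ ⟨hμ0, hμ1⟩
      have harg : μ*p + (1-μ)*1 = a*p + b*q := by
        rw [hμ]; field_simp; ring
      rw [harg, fgen_one hM, mul_zero, add_zero] at hcomb
      have hμa : μ ≤ a := by
        rw [hμ, div_le_iff₀ hp1']
        nlinarith [mul_nonneg hb (by linarith : (0:ℝ) ≤ q - 1)]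
      have hf0 : 0 ≤ fgen M p := fgen_nonneg hM hp0 (le_of_lt hp1)
      calc fgen M (a*p + b*q) ≤ μ * fgen M p := hcomb
        _ ≤ a * fgen M p := mul_le_mul_of_nonneg_right hμa hf0
    · rw [mgen_ge_one M (not_lt.mp hz)]
      exact mul_nonneg ha (fgen_nonneg hM hp0 (le_of_lt hp1))
  constructor
  · exact convex_Ici 0
  · intro p hp q hq a b ha hb hab
    simp only [smul_eq_mul]
    by_cases hp1 : p < 1
    · by_cases hq1 : q < 1
      · by_cases hz : a*p + b*q < 1
        · rw [mgen_lt_one M hz, mgen_lt_one M hp1, mgen_lt_one M hq1]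
          have hb' : b = 1 - a := by linarith
          subst hb'
          exact fgen_convex_aux hM ⟨hp, le_of_lt hp1⟩ ⟨hq, le_of_lt hq1⟩ a ⟨ha, by linarith⟩
        · have hmp : 0 ≤ mgen M p := by
            rw [mgen_lt_one M hp1]; exact fgen_nonneg hM hp (le_of_lt hp1)
          have hmq : 0 ≤ mgen M q := by
            rw [mgen_lt_one M hq1]; exact fgen_nonneg hM hq (le_of_lt hq1)
          rw [mgen_ge_one M (not_lt.mp hz)]
          exact add_nonneg (mul_nonneg ha hmp) (mul_nonneg hb hmq)
      · exact key p q a b hp hp1 (not_lt.mp hq1) ha hb hab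
    · by_cases hq1 : q < 1
      · have := key q p b a hq hq1 (not_lt.mp hp1) hb ha (by linarith)
        calc mgen M (a*p + b*q) = mgen M (b*q + a*p) := by rw [add_comm]
          _ ≤ b * mgen M q + a * mgen M p := this
          _ = a * mgen M p + b * mgen M q := by ring
      · have hz1 : (1:ℝ) ≤ a*p + b*q := by
          nlinarith [mul_nonneg ha (show (0:ℝ) ≤ p - 1 by linarith [not_lt.mp hp1]),
            mul_nonneg hb (show (0:ℝ) ≤ q - 1 by linarith [not_lt.mp hq1])]
        rw [mgen_ge_one M hz1, mgen_ge_one M (not_lt.mp hp1), mgen_ge_one M (not_lt.mp hq1)]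
        norm_num
end withM3

lemma backward {M : ∀ N : ℕ, (Fin N → ℝ) → ℝ} {m : ℝ → ℝ} (hGF : IsCanonicalGF m)
    (hform : ∀ (N : ℕ) (P : Fin N → ℝ), IsCountingVector P → M N P = ∑ i, m (P i)) :
    IsCoENF M := by
  obtain ⟨hconv, hcont, hm0, hm1⟩ := hGF
  have hm1' : m 1 = 0 := hm1 1 le_rfl
  have hmge0 : ∀ p : ℝ, 0 ≤ p → 0 ≤ m p := by
    intro p hp
    rcases le_or_gt 1 p with h | h
    · rw [hm1 p h]
    · have h2 : (0:ℝ) ≤ 2 - p := by linarith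
      have hc := hconv.2 (by exact hp : p ∈ Set.Ici (0:ℝ)) (h2 : (2 - p) ∈ Set.Ici (0:ℝ))
        (by norm_num : (0:ℝ) ≤ 1/2) (by norm_num : (0:ℝ) ≤ 1/2) (by norm_num)
      simp only [smul_eq_mul] at hc
      rw [show (1/2 : ℝ) * p + (1/2) * (2 - p) = 1 by ring, hm1'] at hc
      rw [hm1 (2-p) (by linarith)] at hc
      linarith
  refine ⟨?_, ?_, ?_, ?_, ?_⟩
  · -- (A)
    intro N K P Q hP hQ
    have hcv := CoENFAux.cv_append hP hQ
    rw [hform _ _ hcv, hform _ _ hP, hform _ _ hQ, Fin.sum_univ_add]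
    simp only [Fin.append_left, Fin.append_right]
  · -- (S)
    intro N P hP σ
    have hcvσ : IsCountingVector (P ∘ σ) := by
      constructor
      · intro i; exact hP.1 _
      · rw [show ∑ i, (P ∘ σ) i = ∑ i, P i from Equiv.sum_comp σ P, hP.2]
    rw [hform _ _ hcvσ, hform _ _ hP]
    exact Equiv.sum_comp σ (fun x => m (P x))
  · -- (C)
    intro N
    have hsum : ContinuousOn (fun P : Fin N → ℝ => ∑ i, m (P i))
        {P : Fin N → ℝ | IsCountingVector P} := by
      apply continuousOn_finset_sum
      intro i _
      have happ : Continuous (fun P : Fin N → ℝ => P i) := continuous_apply i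
      have hmaps : Set.MapsTo (fun P : Fin N → ℝ => P i)
          {P : Fin N → ℝ | IsCountingVector P} (Set.Ici 0) := fun P hP => hP.1 i
      have := ContinuousOn.comp hcont happ.continuousOn hmaps
      simpa [Function.comp_def] using this
    exact ContinuousOn.congr hsum (fun P hP => hform N P hP)
  · -- (M⁺)
    intro N P hP i j hij hle ε hε hεi hεN
    have hcvU : IsCountingVector
        (Function.update (Function.update P i (P i - ε)) j (P j + ε)) :=
      CoENFAux.cv_update_pair hP hij (by linarith) (by linarith [hP.1 j]) (by ring)
    rw [hform _ _ hP, hform _ _ hcvU, CoENFAux.sum_comp_update_pair m P hij]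
    have hkey : m (P i) + m (P j) ≤ m (P i - ε) + m (P j + ε) := by
      set u := P i - ε with hu
      set v := P j + ε with hv
      have huv : u < v := by rw [hu, hv]; linarith
      have hu0 : (0:ℝ) ≤ u := by rw [hu]; linarith
      have hv0 : (0:ℝ) ≤ v := by rw [hv]; linarith [hP.1 j]
      have hvu : 0 < v - u := by linarith
      set lam := (v - P i)/(v - u) with hlam
      have hl0 : 0 ≤ lam := div_nonneg (by rw [hv]; linarith) (by linarith)
      have hl1 : lam ≤ 1 := by
        rw [hlam, div_le_one hvu]; rw [hu]; linarith
      have h1 := hconv.2 (hu0 : u ∈ Set.Ici (0:ℝ)) (hv0 : v ∈ Set.Ici (0:ℝ))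
        hl0 (by linarith : (0:ℝ) ≤ 1 - lam) (by ring)
      have h2 := hconv.2 (hu0 : u ∈ Set.Ici (0:ℝ)) (hv0 : v ∈ Set.Ici (0:ℝ))
        (by linarith : (0:ℝ) ≤ 1 - lam) hl0 (by ring)
      simp only [smul_eq_mul] at h1 h2
      have harg1 : lam * u + (1 - lam) * v = P i := by
        rw [hlam]; field_simp; ring
      have harg2 : (1 - lam) * u + lam * v = P j := by
        rw [hlam]; field_simp
        rw [hu, hv]; ring
      rw [harg1] at h1
      rw [harg2] at h2
      have := add_le_add h1 h2
      calc m (P i) + m (P j) ≤ lam * m u + (1-lam) * m v + ((1-lam) * m u + lam * m v) :=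
            this
        _ = m u + m v := by ring
    linarith
  · -- (co-B2)
    intro N
    have hcvB : IsCountingVector (fun k : Fin (N+1) => if k = 0 then ((N+1:ℕ):ℝ) else 0) :=
      CoENFAux.cv_pile N
    rw [hform _ _ hcvB, Fin.sum_univ_succ]
    have h0 : m ((N+1:ℕ):ℝ) = 0 := hm1 _ (by push_cast; linarith [(Nat.cast_nonneg N : (0:ℝ) ≤ N)])
    have hfirst : (if (0 : Fin (N+1)) = 0 then ((N+1:ℕ):ℝ) else 0) = ((N+1:ℕ):ℝ) :=
      if_pos rfl
    have hrest : ∀ i : Fin N, (if (i.succ : Fin (N+1)) = 0 then ((N+1:ℕ):ℝ) else 0) = 0 :=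
      fun i => if_neg (Fin.succ_ne_zero i)
    rw [hfirst, h0]
    simp only [hrest, hm0]
    simp


end CoENFAux

theorem coENF_characterization (M : ∀ N : ℕ, (Fin N → ℝ) → ℝ) :
    -- M is a co-ENF iff it is generated by a canonical generating function ...
    (IsCoENF M ↔ ∃ m : ℝ → ℝ, IsCanonicalGF m ∧
      ∀ (N : ℕ) (P : Fin N → ℝ), IsCountingVector P → M N P = ∑ i, m (P i)) ∧
    -- ... and such a generating function is unique
    (∀ m₁ m₂ : ℝ → ℝ,
      IsCanonicalGF m₁ →
      (∀ (N : ℕ) (P : Fin N → ℝ), IsCountingVector P → M N P = ∑ i, m₁ (P i)) →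
      IsCanonicalGF m₂ →
      (∀ (N : ℕ) (P : Fin N → ℝ), IsCountingVector P → M N P = ∑ i, m₂ (P i)) →
      ∀ p : ℝ, 0 ≤ p → m₁ p = m₂ p) := by
  constructor
  · constructor
    · intro hM
      refine ⟨CoENFAux.mgen M, ⟨CoENFAux.mgen_convex hM, CoENFAux.mgen_contOn hM,
        CoENFAux.mgen_zero hM, fun p hp => CoENFAux.mgen_ge_one M hp⟩, ?_⟩
      intro N P hP
      exact CoENFAux.formula hM hP
    · rintro ⟨m, hGF, hform⟩
      exact CoENFAux.backward hGF hform
  · intro m₁ m₂ h₁GF h₁ h₂GF h₂ p hp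
    by_cases h : 1 ≤ p
    · rw [h₁GF.2.2.2 p h, h₂GF.2.2.2 p h]
    · push_neg at h
      have hcv : IsCountingVector (fun t : Fin 2 => if t = 0 then p else 2 - p) := by
        constructor
        · intro t; dsimp only; split
          · exact hp
          · linarith
        · rw [Fin.sum_univ_two]; norm_num
      have e1 := h₁ 2 _ hcv
      have e2 := h₂ 2 _ hcv
      rw [Fin.sum_univ_two] at e1 e2
      have hv0 : (if (0 : Fin 2) = 0 then p else 2 - p) = p := if_pos rfl
      have hv1 : (if (1 : Fin 2) = 0 then p else 2 - p) = 2 - p := if_neg (by decide)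
      rw [hv0, hv1] at e1 e2
      have h2p : (1:ℝ) ≤ 2 - p := by linarith
      rw [h₁GF.2.2.2 _ h2p] at e1
      rw [h₂GF.2.2.2 _ h2p] at e2
      linarith
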